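/- Let k ≥ 2 and let v : M → ℝ≥0 be an additive valuation with value v(S) = Σ_{g∈S} v(g). Let X ⊆ M be a bundle and Y = {g_1,...,g_k} ⊆ M be a set of k goods disjoint from X such that v(g) > v(X)/(k+1) for every g ∈ Y, and v(Y) ≤ (k+1)/(k+2) · v(X). Order Y so that v(g_1) ≥ ... ≥ v(g_k). Then v(g_k) ≤ (k+1)/(k(k+2)) · v(X) and v(Y \ {g_k}) > (k-1)/(k+1) · v(X), and consequently (1/(k+1)) · v(X ∪ (Y \ {g_k})) > v(g_k). -/
import Mathlib


open Finset

/-- key computation of Lemma `criticals-eliminated`. -/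
theorem stmt0 {M : Type*} [DecidableEq M] (k : ℕ) (hk : 2 ≤ k)
    (v : M → ℝ) (hv : ∀ g, 0 ≤ v g)
    (X Y : Finset M) (hdisj : Disjoint X Y) (hYcard : Y.card = k)
    (hcrit : ∀ g ∈ Y, (∑ x ∈ X, v x) / ((k : ℝ) + 1) < v g)
    (hYval : ∑ g ∈ Y, v g ≤ ((k : ℝ) + 1) / ((k : ℝ) + 2) * ∑ x ∈ X, v x)
    (gk : M) (hgk : gk ∈ Y) (hmin : ∀ g ∈ Y, v gk ≤ v g) :
    v gk ≤ ((k : ℝ) + 1) / ((k : ℝ) * ((k : ℝ) + 2)) * ∑ x ∈ X, v x ∧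
    ((k : ℝ) - 1) / ((k : ℝ) + 1) * ∑ x ∈ X, v x < ∑ g ∈ Y \ {gk}, v g ∧
    v gk < (1 / ((k : ℝ) + 1)) * ∑ g ∈ X ∪ (Y \ {gk}), v g := by
  have hkR : (2 : ℝ) ≤ (k : ℝ) := by exact_mod_cast hk
  set VX := ∑ x ∈ X, v x with hVX
  have hVX0 : 0 ≤ VX := Finset.sum_nonneg fun x _ => hv x
  -- k * v gk ≤ ∑ Y
  have h1 : (k : ℝ) * v gk ≤ ∑ g ∈ Y, v g := by
    calc (k : ℝ) * v gk = ∑ _g ∈ Y, v gk := by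
          rw [Finset.sum_const, hYcard]; ring
      _ ≤ ∑ g ∈ Y, v g := Finset.sum_le_sum fun g hg => hmin g hg
  have part1 : v gk ≤ ((k : ℝ) + 1) / ((k : ℝ) * ((k : ℝ) + 2)) * VX := by
    have hk0 : (0 : ℝ) < k := by linarith
    have h2 := h1.trans hYval
    rw [div_mul_eq_mul_div, le_div_iff₀ (by positivity)] at h2
    rw [div_mul_eq_mul_div, le_div_iff₀ (by positivity)]
    nlinarith [h2]
  -- card of Y \ {gk}
  have hcard : (Y \ {gk}).card = k - 1 := by
    rw [Finset.sdiff_singleton_eq_erase, Finset.card_erase_of_mem hgk, hYcard]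
  have hcardR : ((Y \ {gk}).card : ℝ) = (k : ℝ) - 1 := by
    rw [hcard]; have : 1 ≤ k := by omega
    push_cast [Nat.cast_sub this]; ring
  have hne : (Y \ {gk}).Nonempty := by
    rw [← Finset.card_pos, hcard]; omega
  have part2 : ((k : ℝ) - 1) / ((k : ℝ) + 1) * VX < ∑ g ∈ Y \ {gk}, v g := by
    have := Finset.sum_lt_sum_of_nonempty hne
      (f := fun _ => VX / ((k : ℝ) + 1)) (g := v)
      (fun g hg => hcrit g (Finset.mem_sdiff.mp hg).1)
    rw [Finset.sum_const, nsmul_eq_mul, hcardR] at this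
    calc ((k : ℝ) - 1) / ((k : ℝ) + 1) * VX
        = ((k : ℝ) - 1) * (VX / ((k : ℝ) + 1)) := by ring
      _ < _ := this
  refine ⟨part1, part2, ?_⟩
  have hsum : ∑ g ∈ X ∪ (Y \ {gk}), v g = VX + ∑ g ∈ Y \ {gk}, v g := by
    rw [Finset.sum_union (hdisj.mono_right (Finset.sdiff_subset))]
  rw [hsum]
  have hkpos : (0 : ℝ) < (k : ℝ) + 1 := by linarith
  rw [one_div, inv_mul_eq_div, lt_div_iff₀ hkpos]
  -- v gk * (k+1) < VX + ∑ Y\{gk}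
  have h2 : ((k : ℝ) - 1) / ((k : ℝ) + 1) * VX < ∑ g ∈ Y \ {gk}, v g := part2
  have h3 : v gk ≤ ((k : ℝ) + 1) / ((k : ℝ) * ((k : ℝ) + 2)) * VX := part1
  have hk0 : (0 : ℝ) < k := by linarith
  set S := ∑ g ∈ Y \ {gk}, v g with hS
  have hA : v gk * ((k:ℝ) * ((k:ℝ)+2)) ≤ ((k:ℝ)+1) * VX := by
    rw [div_mul_eq_mul_div, le_div_iff₀ (by positivity)] at h3
    linarith
  have hB : ((k:ℝ)-1) * VX < ((k:ℝ)+1) * S := by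
    rw [div_mul_eq_mul_div, div_lt_iff₀ hkpos] at h2
    linarith
  nlinarith [mul_le_mul_of_nonneg_left hA (sq_nonneg ((k:ℝ)+1)),
    mul_lt_mul_of_pos_left hB (show (0:ℝ) < (k:ℝ)*((k:ℝ)+2) by nlinarith),
    mul_nonneg hVX0 (show (0:ℝ) ≤ 2*(k:ℝ)^2*((k:ℝ)+2)-((k:ℝ)+1)^3 by nlinarith),
    show (0:ℝ) < (k:ℝ)*((k:ℝ)+2)*((k:ℝ)+1) by positivity]
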